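/- Let κ be an infinite cardinal and let L be a (κ, n)-entangled linear order. Then for every collection F of size κ of injective, mutually disjoint n-tuples of L and every binary n-tuple t ∈ 2ⁿ, there exists an infinite subset H ⊆ F such that every two distinct elements of H realize t. -/

import Mathlib

open Cardinal

def Realizes {L : Type*} [LinearOrder L] {n : ℕ} (t : Fin n → Bool) (e e' : Fin n → L) : Prop :=
  (∀ i, t i = true ↔ e' i < e i) ∨ (∀ i, t i = true ↔ e i < e' i)

/-- `L` is `(κ, n)`-entangled. -/
def Entangled (L : Type*) [LinearOrder L] (κ : Cardinal) (n : ℕ) : Prop :=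
  κ ≤ #L ∧
  ∀ F : Set (Fin n → L),
    (∀ e ∈ F, Function.Injective e) →
    (F.Pairwise fun e e' => ∀ i j, e i ≠ e' j) →
    #F = κ →
    ∀ t : Fin n → Bool, ∃ e ∈ F, ∃ e' ∈ F, e ≠ e' ∧ Realizes t e e'

section EDM
open Set

universe u
variable {α : Type u}

namespace EDMaux

theorem mk_diff_eq {S T : Set α} {κ : Cardinal.{u}} (hκ : ℵ₀ ≤ κ)
    (hS : #S = κ) (hT : #T < κ) : #(S \ T : Set α) = κ := by
  refine le_antisymm (hS ▸ mk_le_mk_of_subset diff_subset) ?_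
  by_contra h
  push_neg at h
  have := (Cardinal.le_mk_diff_add_mk S T).trans_lt (Cardinal.add_lt_of_lt hκ h hT)
  exact absurd hS this.ne

/-- Part I: no infinite clique implies a full-size subset with all degrees `< κ`. -/
theorem exists_small_degrees {G : α → α → Prop} (hG : Symmetric G) {κ : Cardinal.{u}}
    (hκ : ℵ₀ ≤ κ) {X : Set α} (hX : #X = κ)
    (hno : ¬ ∃ T ⊆ X, T.Infinite ∧ T.Pairwise G) :
    ∃ A ⊆ X, #A = κ ∧ ∀ x ∈ A, #(A ∩ {y | G x y} : Set α) < κ := by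
  by_contra hcon
  push_neg at hcon
  -- the step: from any full-size Y we can pass to a full-size subneighbourhood
  have step : ∀ Y : {Y : Set α // Y ⊆ X ∧ #Y = κ},
      ∃ p : α × {Y : Set α // Y ⊆ X ∧ #Y = κ},
        p.1 ∈ Y.1 ∧ p.2.1 ⊆ Y.1 ∧ p.2.1 ⊆ {y | G p.1 y} ∧ p.1 ∉ p.2.1 := by
    rintro ⟨Y, hYX, hYκ⟩
    obtain ⟨x, hxY, hdeg⟩ := hcon Y hYX hYκ
    have h1 : #(Y ∩ {y | G x y} : Set α) = κ := by
      refine le_antisymm (hYκ ▸ mk_le_mk_of_subset inter_subset_left) hdeg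
    have h2 : #((Y ∩ {y | G x y}) \ {x} : Set α) = κ :=
      mk_diff_eq hκ h1 ((mk_singleton x).trans_lt (lt_of_lt_of_le one_lt_aleph0 hκ))
    exact ⟨⟨x, ⟨(Y ∩ {y | G x y}) \ {x},
        fun z hz => hYX hz.1.1, h2⟩⟩, hxY,
        fun z hz => hz.1.1, fun z hz => hz.1.2, fun hx => hx.2 rfl⟩
  classical
  let f : {Y : Set α // Y ⊆ X ∧ #Y = κ} → α × {Y : Set α // Y ⊆ X ∧ #Y = κ} :=
    fun Y => (step Y).choose
  have hf := fun Y => (step Y).choose_spec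
  let seq : ℕ → {Y : Set α // Y ⊆ X ∧ #Y = κ} := fun n =>
    Nat.rec ⟨X, Subset.rfl, hX⟩ (fun _ p => (f p).2) n
  let xs : ℕ → α := fun n => (f (seq n)).1
  have hseq : ∀ n, seq (n + 1) = (f (seq n)).2 := fun n => rfl
  have hmem : ∀ n, xs n ∈ (seq n).1 := fun n => (hf (seq n)).1
  have hsub : ∀ n, (seq (n + 1)).1 ⊆ (seq n).1 := fun n => (hf (seq n)).2.1
  have hnbr : ∀ n, (seq (n + 1)).1 ⊆ {y | G (xs n) y} := fun n => (hf (seq n)).2.2.1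
  have hout : ∀ n, xs n ∉ (seq (n + 1)).1 := fun n => (hf (seq n)).2.2.2
  have hmono : ∀ m n, m ≤ n → (seq n).1 ⊆ (seq m).1 := by
    intro m n h
    induction n with
    | zero => rw [Nat.le_zero.mp h]
    | succ k ih =>
      rcases Nat.lt_or_ge m (k+1) with h' | h'
      · exact (hsub k).trans (ih (Nat.lt_succ_iff.mp h'))
      · rw [Nat.le_antisymm h h']
  have hGlt : ∀ m n, m < n → G (xs m) (xs n) := by
    intro m n h
    exact hnbr m (hmono (m+1) n h (hmem n))
  have hinj : Function.Injective xs := by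
    intro m n h
    by_contra hne
    rcases Nat.lt_or_ge m n with h' | h'
    · exact hout m (h ▸ hmono (m+1) n h' (hmem n))
    · exact hout n (h ▸ hmono (n+1) m (lt_of_le_of_ne h' (Ne.symm hne)) (hmem m))
  refine hno ⟨Set.range xs, ?_, Set.infinite_range_of_injective hinj, ?_⟩
  · rintro _ ⟨n, rfl⟩
    exact (seq n).2.1 (hmem n)
  · rintro _ ⟨m, rfl⟩ _ ⟨n, rfl⟩ hne
    rcases Nat.lt_or_ge m n with h' | h'
    · exact hGlt m n h'
    · exact hG (hGlt n m (lt_of_le_of_ne h' (fun h => hne (h ▸ rfl))))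

theorem exists_maximal_indep (G : α → α → Prop) (P : Set α) :
    ∃ T ⊆ P, T.Pairwise (fun a b => ¬ G a b) ∧
      ∀ x ∈ P, (insert x T).Pairwise (fun a b => ¬ G a b) → x ∈ T := by
  have hch : ∀ c ⊆ {T : Set α | T ⊆ P ∧ T.Pairwise (fun a b => ¬ G a b)},
      IsChain (· ⊆ ·) c → ∃ ub ∈ {T : Set α | T ⊆ P ∧ T.Pairwise (fun a b => ¬ G a b)},
        ∀ s ∈ c, s ⊆ ub := by
    intro c hc hchain
    refine ⟨⋃₀ c, ⟨fun x hx => ?_, ?_⟩, fun s hs => subset_sUnion_of_mem hs⟩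
    · obtain ⟨s, hs, hxs⟩ := hx
      exact (hc hs).1 hxs
    · rintro a ⟨s, hs, has⟩ b ⟨s', hs', hbs⟩ hne
      rcases hchain.total hs hs' with h | h
      · exact (hc hs').2 (h has) hbs hne
      · exact (hc hs).2 has (h hbs) hne
  obtain ⟨T, hT⟩ := zorn_subset _ hch
  refine ⟨T, hT.prop.1, hT.prop.2, fun x hx hins => ?_⟩
  have : insert x T ⊆ T := hT.2 ⟨insert_subset hx hT.prop.1, hins⟩ (subset_insert x T)
  exact this (mem_insert x T)

/-- a maximal independent set together with the neighbourhoods of its points covers `P`. -/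
theorem cover_of_maximal_indep {G : α → α → Prop} (hG : Symmetric G) {P T : Set α}
    (hTP : T ⊆ P) (hpair : T.Pairwise (fun a b => ¬ G a b))
    (hmax : ∀ x ∈ P, (insert x T).Pairwise (fun a b => ¬ G a b) → x ∈ T) :
    P ⊆ T ∪ ⋃ y ∈ T, {z | G y z} := by
  intro x hx
  by_cases hxT : x ∈ T
  · exact Or.inl hxT
  by_contra hxn
  refine hxT (hmax x hx ?_)
  intro a ha b hb hne
  rcases ha with rfl | ha
  · rcases hb with rfl | hb
    · exact absurd rfl hne
    · intro hab
      exact hxn (Or.inr (mem_iUnion₂.mpr ⟨b, hb, hG hab⟩))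
  · rcases hb with rfl | hb
    · intro hab
      exact hxn (Or.inr (mem_iUnion₂.mpr ⟨a, ha, hab⟩))
    · exact hpair ha hb hne

theorem indep_of_regular {G : α → α → Prop} (hG : Symmetric G) {μ : Cardinal.{u}}
    (hreg : Cardinal.IsRegular μ) {X : Set α} (hX : #X = μ)
    (hno : ¬ ∃ T ⊆ X, T.Infinite ∧ T.Pairwise G) :
    ∃ T ⊆ X, #T = μ ∧ T.Pairwise (fun a b => ¬ G a b) := by
  obtain ⟨A, hAX, hAμ, hdeg⟩ := exists_small_degrees hG hreg.aleph0_le hX hno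
  obtain ⟨T, hTA, hpair, hmax⟩ := exists_maximal_indep G A
  refine ⟨T, hTA.trans hAX, ?_, hpair⟩
  refine le_antisymm (hAμ ▸ mk_le_mk_of_subset hTA) (le_of_not_gt fun hlt => ?_)
  have hcov := cover_of_maximal_indep hG hTA hpair hmax
  have hcov' : A ⊆ T ∪ ⋃ y ∈ T, (A ∩ {z | G y z}) := by
    intro x hx
    rcases hcov hx with h | h
    · exact Or.inl h
    · obtain ⟨y, hy, hxy⟩ := mem_iUnion₂.mp h
      exact Or.inr (mem_iUnion₂.mpr ⟨y, hy, hx, hxy⟩)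
  have h1 : #A ≤ #T + #(⋃ y ∈ T, (A ∩ {z | G y z}) : Set α) :=
    (mk_le_mk_of_subset hcov').trans (mk_union_le _ _)
  have h2 : #(⋃ y ∈ T, (A ∩ {z | G y z}) : Set α) < μ := by
    refine (mk_biUnion_le _ _).trans_lt ?_
    refine Cardinal.mul_lt_of_lt hreg.aleph0_le hlt ?_
    refine Ordinal.iSup_lt ?_ ?_
    · rwa [hreg.cof_eq]
    · exact fun y => hdeg y.1 (hTA y.2)
  exact absurd hAμ (h1.trans_lt (Cardinal.add_lt_of_lt hreg.aleph0_le hlt h2)).ne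

/-- the set of points of `A` adjacent to some point of `T` -/
def cls (G : α → α → Prop) (A T : Set α) : Set α :=
  ⋃ y ∈ T, (A ∩ {z | G y z})

/-- The chunk extraction step for the singular case. -/
theorem chunk {G : α → α → Prop} (hG : Symmetric G) {κ : Cardinal.{u}} (hκ : ℵ₀ ≤ κ)
    (hsing : ¬ Cardinal.IsRegular κ) {A : Set α} (hA : #A = κ)
    (hdeg : ∀ x ∈ A, #(A ∩ {y | G x y} : Set α) < κ)
    (hno : ¬ ∃ T ⊆ A, T.Infinite ∧ T.Pairwise G)
    {W : Set α} (hW : #W < κ) {σ : Cardinal.{u}} (hσ : σ < κ) :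
    ∃ H ⊆ A \ W, H.Pairwise (fun a b => ¬ G a b) ∧ σ ≤ #H ∧ #H < κ ∧
      #(cls G A H) < κ := by
  have hℵκ : ℵ₀ < κ := lt_of_le_of_ne hκ (fun h => hsing (h ▸ isRegular_aleph0))
  have hcof : κ.ord.cof < κ :=
    lt_of_le_of_ne (Ordinal.cof_ord_le κ) (fun h => hsing ⟨hκ, h.ge⟩)
  set R : Set α := A \ W with hRdef
  have hR : #R = κ := mk_diff_eq hκ hA hW
  have hRA : R ⊆ A := diff_subset
  set m : Cardinal.{u} := max (max σ κ.ord.cof) ℵ₀ with hmdef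
  have hmκ : m < κ := max_lt (max_lt hσ hcof) hℵκ
  have hℵm : ℵ₀ ≤ m := le_max_right _ _
  set μ : Cardinal.{u} := Order.succ m with hμdef
  have hμreg : Cardinal.IsRegular μ := isRegular_succ hℵm
  have hμκ : μ ≤ κ := Order.succ_le_of_lt hmκ
  obtain ⟨X', hX'R, hX'μ⟩ := Cardinal.le_mk_iff_exists_subset.mp (hR ▸ hμκ)
  have hno' : ¬ ∃ T ⊆ X', T.Infinite ∧ T.Pairwise G := by
    rintro ⟨T, hT, h1, h2⟩
    exact hno ⟨T, hT.trans (hX'R.trans hRA), h1, h2⟩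
  obtain ⟨H', hH'X', hH'μ, hH'pair⟩ := indep_of_regular hG hμreg hX'μ hno'
  obtain ⟨ι, f, hlsub, hι⟩ := Ordinal.exists_lsub_cof κ.ord
  set lev : ι → Set α := fun i => {y | y ∈ H' ∧ #(A ∩ {z | G y z} : Set α) ≤ (f i).card}
    with hlevdef
  have hcover : H' ⊆ ⋃ i, lev i := by
    intro y hy
    have hyA : y ∈ A := hRA (hX'R (hH'X' hy))
    have hd : (#(A ∩ {z | G y z} : Set α)).ord < Ordinal.lsub f := by
      rw [hlsub]
      exact Cardinal.ord_lt_ord.mpr (hdeg y hyA)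
    obtain ⟨i, hi⟩ := Ordinal.lt_lsub_iff.mp hd
    refine mem_iUnion.mpr ⟨i, hy, ?_⟩
    calc #(A ∩ {z | G y z} : Set α) = (#(A ∩ {z | G y z} : Set α)).ord.card :=
          (Cardinal.card_ord _).symm
      _ ≤ (f i).card := Ordinal.card_le_card hi
  have hbig : ∃ i, m < #(lev i) := by
    by_contra hcon
    push_neg at hcon
    have h1 : μ ≤ #(⋃ i, lev i : Set α) := hH'μ ▸ mk_le_mk_of_subset hcover
    have h2 : #(⋃ i, lev i : Set α) ≤ #ι * ⨆ i, #(lev i) := mk_iUnion_le lev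
    have h3 : (⨆ i, #(lev i)) ≤ m := ciSup_le' hcon
    have hcofm : #ι ≤ m := by
      rw [hι]
      exact (le_max_right σ _).trans (le_max_left _ ℵ₀)
    have h4 : #ι * ⨆ i, #(lev i) ≤ m * m := mul_le_mul' hcofm h3
    have h5 : m * m = m := Cardinal.mul_eq_self hℵm
    have := (h1.trans h2).trans (h4.trans_eq h5)
    exact absurd this (not_le_of_gt (Order.lt_succ m))
  obtain ⟨i, hi⟩ := hbig
  have hσlev : σ ≤ #(lev i) :=
    ((le_max_left σ κ.ord.cof).trans (le_max_left _ ℵ₀)).trans hi.le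
  obtain ⟨H, hHlev, hHσ⟩ := Cardinal.le_mk_iff_exists_subset.mp hσlev
  have hν : (f i).card < κ := by
    rw [← Cardinal.lt_ord, ← hlsub]
    exact Ordinal.lt_lsub f i
  have hHH' : H ⊆ H' := fun y hy => (hHlev hy).1
  refine ⟨H, fun y hy => hX'R (hH'X' (hHH' hy)), hH'pair.mono hHH', hHσ.ge, hHσ.trans_lt hσ, ?_⟩
  refine ((mk_biUnion_le (fun y => A ∩ {z | G y z}) H).trans_lt ?_ : #(⋃ y ∈ H, (A ∩ {z | G y z}) : Set α) < κ)
  refine Cardinal.mul_lt_of_lt hκ (hHσ.trans_lt hσ) ?_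
  refine (ciSup_le' fun y => (hHlev y.2).2).trans_lt hν

variable {I : Type u}

def GoodP (G : α → α → Prop) (A : Set α) (κ : Cardinal.{u}) [LT I] (σt : I → Cardinal.{u})
    (b : I) (prev : ∀ c : I, c < b → Set α) (H : Set α) : Prop :=
  H ⊆ A ∧ H.Pairwise (fun x y => ¬ G x y) ∧ σt b ≤ #H ∧ #H < κ ∧ #(cls G A H) < κ ∧
    ∀ c (hc : c < b), Disjoint H (prev c hc ∪ cls G A (prev c hc))

open Classical in
noncomputable def DFun (G : α → α → Prop) (A : Set α) (κ : Cardinal.{u})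
    [LinearOrder I] [WellFoundedLT I] (σt : I → Cardinal.{u}) : I → Set α :=
  (IsWellFounded.wf (r := ((· < ·) : I → I → Prop))).fix
    (fun b prev => if h : ∃ H, GoodP G A κ σt b prev H then h.choose else ∅)

open Classical in
theorem DFun_eq (G : α → α → Prop) (A : Set α) (κ : Cardinal.{u})
    [LinearOrder I] [WellFoundedLT I] (σt : I → Cardinal.{u}) (b : I) :
    DFun G A κ σt b =
      if h : ∃ H, GoodP G A κ σt b (fun c _ => DFun G A κ σt c) H then h.choose else ∅ :=
  WellFounded.fix_eq _ _ _

theorem edm {G : α → α → Prop} (hG : Symmetric G) {κ : Cardinal.{u}} (hκ : ℵ₀ ≤ κ)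
    {V : Set α} (hV : #V = κ) (hno : ¬ ∃ T ⊆ V, T.Infinite ∧ T.Pairwise G) :
    ∃ T ⊆ V, #T = κ ∧ T.Pairwise (fun a b => ¬ G a b) := by
  classical
  by_cases hreg : Cardinal.IsRegular κ
  · exact (indep_of_regular hG hreg hV hno).imp fun T ⟨h1, h2, h3⟩ => ⟨h1, h2, h3⟩
  obtain ⟨A, hAV, hAκ, hdeg⟩ := exists_small_degrees hG hκ hV hno
  have hnoA : ¬ ∃ T ⊆ A, T.Infinite ∧ T.Pairwise G := by
    rintro ⟨T, h1, h2, h3⟩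
    exact hno ⟨T, h1.trans hAV, h2, h3⟩
  obtain ⟨ι, f, hlsub, hι⟩ := Ordinal.exists_lsub_cof κ.ord
  set I : Type u := κ.ord.cof.ord.ToType with hIdef
  have hmkI : #I = κ.ord.cof := by rw [hIdef, Cardinal.mk_toType, Cardinal.card_ord]
  obtain ⟨e⟩ : Nonempty (I ≃ ι) := Cardinal.eq.mp (hmkI.trans hι.symm)
  set σt : I → Cardinal.{u} := fun b => (f (e b)).card with hσtdef
  have hσlt : ∀ b, σt b < κ := by
    intro b
    rw [hσtdef, ← Cardinal.lt_ord, ← hlsub]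
    exact Ordinal.lt_lsub f (e b)
  have hσunb : ∀ ν < κ, ∃ b, ν ≤ σt b := by
    intro ν hν
    have h1 : ν.ord < Ordinal.lsub f := by
      rw [hlsub]
      exact Cardinal.ord_lt_ord.mpr hν
    obtain ⟨j, hj⟩ := Ordinal.lt_lsub_iff.mp h1
    refine ⟨e.symm j, ?_⟩
    have := Ordinal.card_le_card hj
    rw [Cardinal.card_ord] at this
    simpa only [hσtdef, Equiv.apply_symm_apply] using this
  set D : I → Set α := DFun G A κ σt with hDdef
  have key : ∀ b : I, GoodP G A κ σt b (fun c _ => D c) (D b) := by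
    intro b
    induction b using ((IsWellFounded.wf (r := ((· < ·) : I → I → Prop))).induction) with
    | _ b IH =>
    set W : Set α := ⋃ c ∈ Iio b, (D c ∪ cls G A (D c)) with hWdef
    have hWκ : #W < κ := by
      refine (mk_biUnion_le _ _).trans_lt ?_
      have hIio : #(Iio b) < κ.ord.cof := Cardinal.mk_Iio_ord_toType b
      refine Cardinal.mul_lt_of_lt hκ (hIio.trans_le (Ordinal.cof_ord_le κ)) ?_
      refine Ordinal.iSup_lt hIio ?_
      rintro ⟨c, hc⟩
      refine (mk_union_le _ _).trans_lt ?_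
      obtain ⟨-, -, -, h4, h5, -⟩ := IH c hc
      exact Cardinal.add_lt_of_lt hκ h4 h5
    obtain ⟨H, hH1, hH2, hH3, hH4, hH5⟩ := chunk hG hκ hreg hAκ hdeg hnoA hWκ (hσlt b)
    have hex : ∃ H', GoodP G A κ σt b (fun c _ => D c) H' := by
      refine ⟨H, hH1.trans diff_subset, hH2, hH3, hH4, hH5, ?_⟩
      intro c hc
      rw [Set.disjoint_left]
      intro x hx hxc
      exact (hH1 hx).2 (mem_biUnion hc hxc)
    rw [hDdef, DFun_eq G A κ σt b, dif_pos hex]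
    exact hex.choose_spec
  refine ⟨⋃ b, D b, ?_, ?_, ?_⟩
  · exact iUnion_subset fun b => ((key b).1).trans hAV
  · -- cardinality
    have hle : #(⋃ b, D b : Set α) ≤ κ :=
      hAκ ▸ mk_le_mk_of_subset (iUnion_subset fun b => (key b).1)
    refine le_antisymm hle ?_
    by_contra hlt
    push_neg at hlt
    have hsucc : Order.succ #(⋃ b, D b : Set α) < κ := by
      rcases lt_or_eq_of_le (Order.succ_le_of_lt hlt) with h | h
      · exact h
      · exfalso
        have hinf : ℵ₀ ≤ #(⋃ b, D b : Set α) := by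
          by_contra hfin
          push_neg at hfin
          have h2 : Order.succ #(⋃ b, D b : Set α) < ℵ₀ :=
            Cardinal.isSuccLimit_aleph0.succ_lt hfin
          rw [h] at h2
          exact absurd hκ (not_le_of_gt h2)
        exact hreg (h ▸ isRegular_succ hinf)
    obtain ⟨b, hb⟩ := hσunb _ hsucc
    have : Order.succ #(⋃ b, D b : Set α) ≤ #(⋃ b, D b : Set α) :=
      (hb.trans (key b).2.2.1).trans (mk_le_mk_of_subset (subset_iUnion D b))
    exact absurd this (not_le_of_gt (Order.lt_succ _))
  · -- pairwise
    rintro x hx y hy hne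
    obtain ⟨b, hxb⟩ := mem_iUnion.mp hx
    obtain ⟨c, hyc⟩ := mem_iUnion.mp hy
    rcases lt_trichotomy b c with h | h | h
    · intro hGxy
      have hyA : y ∈ A := (key c).1 hyc
      have hycls : y ∈ cls G A (D b) := mem_biUnion hxb ⟨hyA, hGxy⟩
      exact Set.disjoint_left.mp ((key c).2.2.2.2.2 b h) hyc (Or.inr hycls) |>.elim
    · exact (key b).2.1 hxb (h ▸ hyc) hne
    · intro hGxy
      have hxA : x ∈ A := (key b).1 hxb
      have hxcls : x ∈ cls G A (D c) := mem_biUnion hyc ⟨hxA, hG hGxy⟩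
      exact Set.disjoint_left.mp ((key b).2.2.2.2.2 c h) hxb (Or.inr hxcls) |>.elim

end EDMaux

end EDM

/-- In a `(κ, n)`-entangled linear order, every size-`κ` family of injective,
mutually disjoint `n`-tuples contains an infinite subfamily whose members
pairwise realize any given type `t`. -/
theorem entangled_infinite_subfamily (L : Type*) [LinearOrder L] (κ : Cardinal)
    (hκ : ℵ₀ ≤ κ) (n : ℕ) (hL : Entangled L κ n)
    (F : Set (Fin n → L))
    (hinj : ∀ e ∈ F, Function.Injective e)
    (hdisj : F.Pairwise fun e e' => ∀ i j, e i ≠ e' j)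
    (hcard : #F = κ) (t : Fin n → Bool) :
    ∃ H ⊆ F, H.Infinite ∧ H.Pairwise (Realizes t) := by
  by_contra hno
  have hsym : Symmetric (fun e e' : Fin n → L => Realizes t e e') :=
    fun e e' h => h.elim Or.inr Or.inl
  obtain ⟨T, hTF, hTκ, hTpair⟩ := EDMaux.edm hsym hκ hcard hno
  obtain ⟨e, he, e', he', hne, hreal⟩ :=
    hL.2 T (fun e heT => hinj e (hTF heT)) (hdisj.mono hTF) hTκ t
  exact hTpair he he' hne hreal
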